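/- Assume the nondegeneracy condition: every smooth vector field v^μ on ℝ^D satisfying G_{μν} v^ν = 0, Γ_{μν,ρ} v^ρ = 0, and H_{μνρ} v^ρ = 0 identically must vanish identically. If ζ^μ and ξ^μ are smooth vector fields with D⁺_μ ζ_ν = 0 and D⁻_μ ξ_ν = 0 for all μ,ν, then their Lie bracket vanishes: ζ^ν ∂_ν ξ^μ − ξ^ν ∂_ν ζ^μ = 0 for all μ. -/

import Mathlib

noncomputable section

/-- Partial derivative of `f` at `x` in the `μ`-th coordinate direction. -/
def pd {D : ℕ} (μ : Fin D) (f : (Fin D → ℝ) → ℝ) (x : Fin D → ℝ) : ℝ :=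
  fderiv ℝ f x (Pi.single μ 1)

/-- A smooth real-valued function. -/
def Sm {D : ℕ} (f : (Fin D → ℝ) → ℝ) : Prop := ContDiff ℝ (⊤ : ℕ∞) f

/-- A smooth vector field on `ℝ^D`. -/
def SmoothVF {D : ℕ} (V : (Fin D → ℝ) → Fin D → ℝ) : Prop := ∀ μ, Sm fun x => V x μ

/-- A smooth field of 2-tensors on `ℝ^D`. -/
def Smooth2T {D : ℕ} (T : (Fin D → ℝ) → Fin D → Fin D → ℝ) : Prop :=
  ∀ μ ν, Sm fun x => T x μ ν

/-- The connection coefficients `Γ_{μν,ρ} = ½(∂_μG_{νρ} + ∂_νG_{μρ} − ∂_ρG_{μν})`. -/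
def Gam {D : ℕ} (G : (Fin D → ℝ) → Fin D → Fin D → ℝ) (μ ν ρ : Fin D) (x : Fin D → ℝ) : ℝ :=
  (pd μ (fun y => G y ν ρ) x + pd ν (fun y => G y μ ρ) x - pd ρ (fun y => G y μ ν) x) / 2

/-- The torsion `H_{μνρ} = ∂_μB_{νρ} + ∂_νB_{ρμ} + ∂_ρB_{μν}`. -/
def Htor {D : ℕ} (B : (Fin D → ℝ) → Fin D → Fin D → ℝ) (μ ν ρ : Fin D) (x : Fin D → ℝ) : ℝ :=
  pd μ (fun y => B y ν ρ) x + pd ν (fun y => B y ρ μ) x + pd ρ (fun y => B y μ ν) x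

/-- `Γ⁺_{μν,ρ} = Γ_{μν,ρ} + ½H_{μνρ}`. -/
def GamP {D : ℕ} (G B : (Fin D → ℝ) → Fin D → Fin D → ℝ) (μ ν ρ : Fin D) (x : Fin D → ℝ) : ℝ :=
  Gam G μ ν ρ x + Htor B μ ν ρ x / 2

/-- `Γ⁻_{μν,ρ} = Γ_{μν,ρ} − ½H_{μνρ}`. -/
def GamM {D : ℕ} (G B : (Fin D → ℝ) → Fin D → Fin D → ℝ) (μ ν ρ : Fin D) (x : Fin D → ℝ) : ℝ :=
  Gam G μ ν ρ x - Htor B μ ν ρ x / 2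

/-- The lowered components `V_μ = G_{μν}V^ν` of a vector field. -/
def lowerV {D : ℕ} (G : (Fin D → ℝ) → Fin D → Fin D → ℝ)
    (V : (Fin D → ℝ) → Fin D → ℝ) (μ : Fin D) (x : Fin D → ℝ) : ℝ :=
  ∑ ν, G x μ ν * V x ν

/-- The covariant derivative `D⁺_μV_ν = G_{νρ}∂_μV^ρ + Γ⁺_{μρ,ν}V^ρ`. -/
def Dp {D : ℕ} (G B : (Fin D → ℝ) → Fin D → Fin D → ℝ)
    (V : (Fin D → ℝ) → Fin D → ℝ) (μ ν : Fin D) (x : Fin D → ℝ) : ℝ :=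
  (∑ ρ, G x ν ρ * pd μ (fun y => V y ρ) x) + ∑ ρ, GamP G B μ ρ ν x * V x ρ

/-- The covariant derivative `D⁻_μV_ν = G_{νρ}∂_μV^ρ + Γ⁻_{μρ,ν}V^ρ`. -/
def Dm {D : ℕ} (G B : (Fin D → ℝ) → Fin D → Fin D → ℝ)
    (V : (Fin D → ℝ) → Fin D → ℝ) (μ ν : Fin D) (x : Fin D → ℝ) : ℝ :=
  (∑ ρ, G x ν ρ * pd μ (fun y => V y ρ) x) + ∑ ρ, GamM G B μ ρ ν x * V x ρ

/-- The Lie derivative of the metric: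
`(ℒ_ζG)_{μν} = ζ^ρ∂_ρG_{μν} + ∂_μζ^ρ·G_{ρν} + ∂_νζ^ρ·G_{μρ}`. -/
def lieG {D : ℕ} (G : (Fin D → ℝ) → Fin D → Fin D → ℝ)
    (ζ : (Fin D → ℝ) → Fin D → ℝ) (μ ν : Fin D) (x : Fin D → ℝ) : ℝ :=
  (∑ ρ, ζ x ρ * pd ρ (fun y => G y μ ν) x)
    + (∑ ρ, pd μ (fun y => ζ y ρ) x * G x ρ ν)
    + ∑ ρ, pd ν (fun y => ζ y ρ) x * G x μ ρ

/-- A Killing pair `(ζ, b)`: `D⁻_μζ_ν + D⁺_νζ_μ + ∂_μb_ν − ∂_νb_μ = 0`. -/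
def IsKillingPair {D : ℕ} (G B : (Fin D → ℝ) → Fin D → Fin D → ℝ)
    (ζ b : (Fin D → ℝ) → Fin D → ℝ) : Prop :=
  ∀ (μ ν : Fin D) (x : Fin D → ℝ),
    Dm G B ζ μ ν x + Dp G B ζ ν μ x
      + pd μ (fun y => b y ν) x - pd ν (fun y => b y μ) x = 0


/-! ### Auxiliary calculus lemmas -/

theorem Sm.diffAt {D : ℕ} {f : (Fin D → ℝ) → ℝ} (hf : Sm f) {x : Fin D → ℝ} :
    DifferentiableAt ℝ f x :=
  (hf.differentiable (by simp)).differentiableAt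

theorem Sm.pd {D : ℕ} {f : (Fin D → ℝ) → ℝ} (hf : Sm f) (μ : Fin D) : Sm (pd μ f) := by
  have h1 : ContDiff ℝ (⊤ : ℕ∞) (fderiv ℝ f) := hf.fderiv_right (by exact_mod_cast le_top)
  exact h1.clm_apply contDiff_const

theorem pd_congr {D : ℕ} {f g : (Fin D → ℝ) → ℝ} (h : ∀ y, f y = g y) (μ : Fin D)
    (x : Fin D → ℝ) : pd μ f x = pd μ g x := by
  have : f = g := funext h
  rw [pd, pd, this]

theorem pd_neg {D : ℕ} {f : (Fin D → ℝ) → ℝ} (μ : Fin D) (x : Fin D → ℝ) :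
    pd μ (fun y => -f y) x = -pd μ f x := by
  rw [pd, pd, fderiv_fun_neg]; simp

theorem pd_of_eq_zero {D : ℕ} {f : (Fin D → ℝ) → ℝ} (h : ∀ y, f y = 0) (μ : Fin D)
    (x : Fin D → ℝ) : pd μ f x = 0 := by
  rw [pd_congr h μ x, pd, fderiv_fun_const]; simp

theorem pd_add {D : ℕ} {f g : (Fin D → ℝ) → ℝ} {x : Fin D → ℝ}
    (hf : DifferentiableAt ℝ f x) (hg : DifferentiableAt ℝ g x) (μ : Fin D) :
    pd μ (fun y => f y + g y) x = pd μ f x + pd μ g x := by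
  rw [pd, pd, pd, fderiv_fun_add hf hg]; simp

theorem pd_sub {D : ℕ} {f g : (Fin D → ℝ) → ℝ} {x : Fin D → ℝ}
    (hf : DifferentiableAt ℝ f x) (hg : DifferentiableAt ℝ g x) (μ : Fin D) :
    pd μ (fun y => f y - g y) x = pd μ f x - pd μ g x := by
  rw [pd, pd, pd, fderiv_fun_sub hf hg]; simp

theorem pd_div_const {D : ℕ} {f : (Fin D → ℝ) → ℝ} {x : Fin D → ℝ}
    (hf : DifferentiableAt ℝ f x) (c : ℝ) (μ : Fin D) :
    pd μ (fun y => f y / c) x = pd μ f x / c := by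
  have : (fun y => f y / c) = fun y => c⁻¹ * f y := by funext y; rw [div_eq_inv_mul]
  rw [pd, pd, this, fderiv_const_mul hf]; simp [div_eq_inv_mul]

theorem pd_mul {D : ℕ} {f g : (Fin D → ℝ) → ℝ} {x : Fin D → ℝ}
    (hf : DifferentiableAt ℝ f x) (hg : DifferentiableAt ℝ g x) (μ : Fin D) :
    pd μ (fun y => f y * g y) x = pd μ f x * g x + f x * pd μ g x := by
  rw [pd, pd, pd, fderiv_fun_mul hf hg]; simp; ring

theorem pd_sum {D : ℕ} {ι : Type*} (s : Finset ι) {f : ι → (Fin D → ℝ) → ℝ} {x : Fin D → ℝ}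
    (hf : ∀ i ∈ s, DifferentiableAt ℝ (f i) x) (μ : Fin D) :
    pd μ (fun y => ∑ i ∈ s, f i y) x = ∑ i ∈ s, pd μ (f i) x := by
  rw [pd, fderiv_fun_sum hf]; simp [pd]

theorem pd_comm {D : ℕ} {f : (Fin D → ℝ) → ℝ} (hf : Sm f) (μ ν : Fin D) (x : Fin D → ℝ) :
    pd μ (pd ν f) x = pd ν (pd μ f) x := by
  have hdf : ∀ y, HasFDerivAt f (fderiv ℝ f y) y :=
    fun y => (hf.differentiable (by simp)).differentiableAt.hasFDerivAt
  have hf' : ContDiff ℝ (⊤ : ℕ∞) (fderiv ℝ f) := hf.fderiv_right (by exact_mod_cast le_top)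
  have hdf' : HasFDerivAt (fderiv ℝ f) (fderiv ℝ (fderiv ℝ f) x) x :=
    (hf'.differentiable (by simp)).differentiableAt.hasFDerivAt
  have hsym := second_derivative_symmetric hdf hdf'
  have expand : ∀ (a b : Fin D), pd a (pd b f) x
      = fderiv ℝ (fderiv ℝ f) x (Pi.single a 1) (Pi.single b 1) := by
    intro a b
    have h : pd b f = fun y => (fderiv ℝ f y) (Pi.single b 1) := rfl
    rw [pd, h, fderiv_clm_apply (hf'.differentiable (by simp)).differentiableAt
      (differentiableAt_const _)]
    simp
  rw [expand, expand, hsym]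

/-! ### The pointwise algebraic core -/

theorem chiralAlg0 {D : ℕ}
    (g : Fin D → Fin D → ℝ)
    (P M : Fin D → Fin D → Fin D → ℝ)
    (z w : Fin D → ℝ) (a c : Fin D → Fin D → ℝ)
    (hPM : ∀ μ ν ρ, P μ ν ρ = M ν μ ρ)
    (hCA : ∀ μ ν, (∑ ρ, (g ν ρ * a μ ρ + P μ ρ ν * z ρ)) = 0)
    (hCB : ∀ μ ν, (∑ ρ, (g ν ρ * c μ ρ + M μ ρ ν * w ρ)) = 0)
    (μ : Fin D) :
    (∑ ρ, g μ ρ * (∑ τ, (z τ * c τ ρ - w τ * a τ ρ))) = 0 := by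
  classical
  obtain ⟨φk, hφk⟩ : ∃ F : Fin D → Fin D → ℝ, F = fun τ ρ =>
      (z τ) * (g μ ρ * c τ ρ) + (z τ) * (M τ ρ μ * w ρ)
      + (-(w τ)) * (g μ ρ * a τ ρ) := ⟨_, rfl⟩
  obtain ⟨φs, hφs⟩ : ∃ F : Fin D → Fin D → ℝ, F = fun τ ρ =>
      (-(w τ)) * (P τ ρ μ * z ρ) := ⟨_, rfl⟩
  have hz : ∀ τ : Fin D, (∑ ρ, (φk τ ρ + φs τ ρ)) = 0 := by
    intro τ
    have E1 := hCB τ μ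
    have E2 := hCA τ μ
    have expand : (∑ ρ, (φk τ ρ + φs τ ρ))
        = (z τ) * (∑ ρ, (g μ ρ * c τ ρ + M τ ρ μ * w ρ))
        + (-(w τ)) * (∑ ρ, (g μ ρ * a τ ρ + P τ ρ μ * z ρ)) := by
      simp only [Finset.mul_sum, ← Finset.sum_add_distrib]
      refine Finset.sum_congr rfl (fun ρ _ => ?_)
      rw [hφk, hφs]; ring
    rw [expand, E1, E2]; ring
  have h0 : (∑ τ, ∑ ρ, (φk τ ρ + φs τ ρ)) = 0 := Finset.sum_eq_zero fun τ _ => hz τ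
  have main : (∑ ρ, g μ ρ * (∑ τ, (z τ * c τ ρ - w τ * a τ ρ)))
      = ∑ τ, ∑ ρ, (φk τ ρ + φs ρ τ) := by
    have step1 : (∑ ρ, g μ ρ * (∑ τ, (z τ * c τ ρ - w τ * a τ ρ)))
        = ∑ ρ, ∑ τ, g μ ρ * (z τ * c τ ρ - w τ * a τ ρ) :=
      Finset.sum_congr rfl (fun ρ _ => Finset.mul_sum _ _ _)
    rw [step1, Finset.sum_comm]
    refine Finset.sum_congr rfl (fun τ _ => Finset.sum_congr rfl (fun ρ _ => ?_))
    rw [hφk, hφs]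
    linear_combination (z τ * w ρ) * hPM ρ τ μ
  have sum_split : ∀ (F G : Fin D → Fin D → ℝ),
      (∑ τ : Fin D, ∑ ρ : Fin D, (F τ ρ + G τ ρ))
        = (∑ τ : Fin D, ∑ ρ : Fin D, F τ ρ) + (∑ τ : Fin D, ∑ ρ : Fin D, G τ ρ) := by
    intro F G
    simp [Finset.sum_add_distrib]
  rw [main, sum_split]
  rw [show (∑ τ : Fin D, ∑ ρ : Fin D, φs ρ τ) = (∑ τ : Fin D, ∑ ρ : Fin D, φs τ ρ) from
    Finset.sum_comm]
  rw [← sum_split]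
  exact h0

theorem chiralAlg {D : ℕ}
    (g : Fin D → Fin D → ℝ) (dg : Fin D → Fin D → Fin D → ℝ)
    (P M : Fin D → Fin D → Fin D → ℝ) (dP dM : Fin D → Fin D → Fin D → Fin D → ℝ)
    (z w : Fin D → ℝ) (a c : Fin D → Fin D → ℝ) (A2 C2 : Fin D → Fin D → Fin D → ℝ)
    (hg : ∀ μ ν, g μ ν = g ν μ)
    (hPM : ∀ μ ν ρ, P μ ν ρ = M ν μ ρ)
    (hdPM : ∀ σ μ ν ρ, dP σ μ ν ρ = dM σ ν μ ρ)
    (hcompP : ∀ μ ν ρ, P μ ν ρ + P μ ρ ν = dg μ ν ρ)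
    (hcompM : ∀ μ ν ρ, M μ ν ρ + M μ ρ ν = dg μ ν ρ)
    (hA : ∀ σ τ ρ, A2 σ τ ρ = A2 τ σ ρ)
    (hC : ∀ σ τ ρ, C2 σ τ ρ = C2 τ σ ρ)
    (hdM4 : ∀ ν τ ρ μ, dM ν τ ρ μ - dM τ ν ρ μ + dM ρ τ μ ν - dM μ τ ρ ν = 0)
    (hCA : ∀ μ ν, (∑ ρ, (g ν ρ * a μ ρ + P μ ρ ν * z ρ)) = 0)
    (hCB : ∀ μ ν, (∑ ρ, (g ν ρ * c μ ρ + M μ ρ ν * w ρ)) = 0)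
    (hDA : ∀ σ μ ν, (∑ ρ, (dg σ ν ρ * a μ ρ + g ν ρ * A2 σ μ ρ + dP σ μ ρ ν * z ρ + P μ ρ ν * a σ ρ)) = 0)
    (hDB : ∀ σ μ ν, (∑ ρ, (dg σ ν ρ * c μ ρ + g ν ρ * C2 σ μ ρ + dM σ μ ρ ν * w ρ + M μ ρ ν * c σ ρ)) = 0)
    (μ ν : Fin D) :
    (∑ ρ, P μ ν ρ * (∑ τ, (z τ * c τ ρ - w τ * a τ ρ))) = 0 := by
  classical
  obtain ⟨φk, hφk⟩ : ∃ F : Fin D → Fin D → ℝ, F = fun τ ρ =>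
      (-(z τ)) * (dg τ μ ρ * c ν ρ) + (-(z τ)) * (g μ ρ * C2 τ ν ρ)
      + (-(z τ)) * (dM τ ν ρ μ * w ρ) + (-(z τ)) * (M ν ρ μ * c τ ρ)
      + (z τ) * (dg ν μ ρ * c τ ρ) + (z τ) * (g μ ρ * C2 ν τ ρ)
      + (z τ) * (dM ν τ ρ μ * w ρ) + (z τ) * (M τ ρ μ * c ν ρ)
      + (w τ) * (dg τ ν ρ * a μ ρ) + (w τ) * (g ν ρ * A2 τ μ ρ)
      + (w τ) * (P μ ρ ν * a τ ρ)
      + (-(w τ)) * (dg μ ν ρ * a τ ρ) + (-(w τ)) * (g ν ρ * A2 μ τ ρ)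
      + (-(w τ)) * (P τ ρ ν * a μ ρ)
      + (-(a μ τ)) * (g τ ρ * c ν ρ) := ⟨_, rfl⟩
  obtain ⟨φs, hφs⟩ : ∃ F : Fin D → Fin D → ℝ, F = fun τ ρ =>
      (w τ) * (dP τ μ ρ ν * z ρ) + (-(w τ)) * (dP μ τ ρ ν * z ρ)
      + (-(a μ τ)) * (M ν ρ τ * w ρ)
      + (c ν τ) * (g τ ρ * a μ ρ) + (c ν τ) * (P μ ρ τ * z ρ) := ⟨_, rfl⟩
  have hz : ∀ τ : Fin D, (∑ ρ, (φk τ ρ + φs τ ρ)) = 0 := by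
    intro τ
    have E1 := hDB τ ν μ
    have E2 := hDB ν τ μ
    have E3 := hDA τ μ ν
    have E4 := hDA μ τ ν
    have E5 := hCB ν τ
    have E6 := hCA μ τ
    have expand : (∑ ρ, (φk τ ρ + φs τ ρ))
        = (-(z τ)) * (∑ ρ, (dg τ μ ρ * c ν ρ + g μ ρ * C2 τ ν ρ + dM τ ν ρ μ * w ρ + M ν ρ μ * c τ ρ))
        + (z τ) * (∑ ρ, (dg ν μ ρ * c τ ρ + g μ ρ * C2 ν τ ρ + dM ν τ ρ μ * w ρ + M τ ρ μ * c ν ρ))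
        + (w τ) * (∑ ρ, (dg τ ν ρ * a μ ρ + g ν ρ * A2 τ μ ρ + dP τ μ ρ ν * z ρ + P μ ρ ν * a τ ρ))
        + (-(w τ)) * (∑ ρ, (dg μ ν ρ * a τ ρ + g ν ρ * A2 μ τ ρ + dP μ τ ρ ν * z ρ + P τ ρ ν * a μ ρ))
        + (-(a μ τ)) * (∑ ρ, (g τ ρ * c ν ρ + M ν ρ τ * w ρ))
        + (c ν τ) * (∑ ρ, (g τ ρ * a μ ρ + P μ ρ τ * z ρ)) := by
      simp only [Finset.mul_sum, ← Finset.sum_add_distrib]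
      refine Finset.sum_congr rfl (fun ρ _ => ?_)
      rw [hφk, hφs]; ring
    rw [expand, E1, E2, E3, E4, E5, E6]; ring
  have h0 : (∑ τ, ∑ ρ, (φk τ ρ + φs τ ρ)) = 0 := Finset.sum_eq_zero fun τ _ => hz τ
  have main : (∑ ρ, P μ ν ρ * (∑ τ, (z τ * c τ ρ - w τ * a τ ρ)))
      = ∑ τ, ∑ ρ, (φk τ ρ + φs ρ τ) := by
    have step1 : (∑ ρ, P μ ν ρ * (∑ τ, (z τ * c τ ρ - w τ * a τ ρ)))
        = ∑ ρ, ∑ τ, P μ ν ρ * (z τ * c τ ρ - w τ * a τ ρ) :=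
      Finset.sum_congr rfl (fun ρ _ => Finset.mul_sum _ _ _)
    rw [step1, Finset.sum_comm]
    refine Finset.sum_congr rfl (fun τ _ => Finset.sum_congr rfl (fun ρ _ => ?_))
    rw [hφk, hφs]
    linear_combination
      (-(z τ * g μ ρ)) * hC ν τ ρ
      - (w τ * g ν ρ) * hA τ μ ρ
      + (z τ * c τ ρ) * hPM μ ν ρ
      + (z τ * c τ ρ) * hcompM ν μ ρ
      - (w τ * a τ ρ) * hcompP μ ν ρ
      + (a μ τ * c ν ρ) * hg τ ρ
      - (z τ * c ν ρ) * hcompM τ μ ρ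
      - (z τ * c ν ρ) * hPM μ τ ρ
      + (w τ * a μ ρ) * hcompP τ ν ρ
      - (w τ * a μ ρ) * hPM τ ν ρ
      - (z τ * w ρ) * hdM4 ν τ ρ μ
      - (z τ * w ρ) * hdPM ρ μ τ ν
      + (z τ * w ρ) * hdPM μ ρ τ ν
  have sum_split : ∀ (F G : Fin D → Fin D → ℝ),
      (∑ τ : Fin D, ∑ ρ : Fin D, (F τ ρ + G τ ρ))
        = (∑ τ : Fin D, ∑ ρ : Fin D, F τ ρ) + (∑ τ : Fin D, ∑ ρ : Fin D, G τ ρ) := by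
    intro F G
    simp [Finset.sum_add_distrib]
  rw [main, sum_split]
  rw [show (∑ τ : Fin D, ∑ ρ : Fin D, φs ρ τ) = (∑ τ : Fin D, ∑ ρ : Fin D, φs τ ρ) from
    Finset.sum_comm]
  rw [← sum_split]
  exact h0

/-- Under the nondegeneracy assumption (iii), the Lie bracket of covariantly constant
vector fields of opposite chirality vanishes. -/
theorem stmt12 {D : ℕ} (hD : 1 ≤ D)
    (G B : (Fin D → ℝ) → Fin D → Fin D → ℝ)
    (hGs : Smooth2T G) (hGsym : ∀ x μ ν, G x μ ν = G x ν μ)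
    (hBs : Smooth2T B) (hBanti : ∀ x μ ν, B x μ ν = -B x ν μ)
    (hnd : ∀ v : (Fin D → ℝ) → Fin D → ℝ, SmoothVF v →
      (∀ μ x, (∑ ν, G x μ ν * v x ν) = 0) →
      (∀ μ ν x, (∑ ρ, Gam G μ ν ρ x * v x ρ) = 0) →
      (∀ μ ν x, (∑ ρ, Htor B μ ν ρ x * v x ρ) = 0) →
      ∀ μ x, v x μ = 0)
    (ζ ξ : (Fin D → ℝ) → Fin D → ℝ) (hζ : SmoothVF ζ) (hξ : SmoothVF ξ)
    (h1 : ∀ μ ν x, Dp G B ζ μ ν x = 0) (h2 : ∀ μ ν x, Dm G B ξ μ ν x = 0) :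
    ∀ μ x, (∑ ν, ζ x ν * pd ν (fun y => ξ y μ) x)
      - (∑ ν, ξ x ν * pd ν (fun y => ζ y μ) x) = 0 := by
  classical
  -- differentiability and smoothness helpers
  have hSmGam : ∀ α β γ, Sm (fun y => Gam G α β γ y) := fun α β γ =>
    ((((hGs β γ).pd α).add ((hGs α γ).pd β)).sub ((hGs α β).pd γ)).div_const 2
  have hSmHtor : ∀ α β γ, Sm (fun y => Htor B α β γ y) := fun α β γ =>
    (((hBs β γ).pd α).add ((hBs γ α).pd β)).add ((hBs α β).pd γ)
  have hSmGamP : ∀ α β γ, Sm (fun y => GamP G B α β γ y) := fun α β γ =>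
    (hSmGam α β γ).add ((hSmHtor α β γ).div_const (2:ℝ))
  have hSmGamM : ∀ α β γ, Sm (fun y => GamM G B α β γ y) := fun α β γ =>
    (hSmGam α β γ).sub ((hSmHtor α β γ).div_const (2:ℝ))
  -- pointwise symmetry facts
  have pdGsym : ∀ (x : Fin D → ℝ) (σ μ ν : Fin D),
      pd σ (fun y => G y μ ν) x = pd σ (fun y => G y ν μ) x :=
    fun x σ μ ν => pd_congr (fun y => hGsym y μ ν) σ x
  have pdBanti : ∀ (x : Fin D → ℝ) (σ μ ν : Fin D),
      pd σ (fun y => B y μ ν) x = -pd σ (fun y => B y ν μ) x := by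
    intro x σ μ ν
    rw [pd_congr (fun y => hBanti y μ ν) σ x, pd_neg]
  have hPMx : ∀ (y : Fin D → ℝ) (μ ν ρ : Fin D),
      GamP G B μ ν ρ y = GamM G B ν μ ρ y := by
    intro y μ ν ρ
    simp only [GamP, GamM, Gam, Htor]
    linear_combination (-1/2 : ℝ) * pdGsym y ρ μ ν + (1/2 : ℝ) * pdBanti y μ ν ρ
      + (1/2 : ℝ) * pdBanti y ν ρ μ + (1/2 : ℝ) * pdBanti y ρ μ ν
  have hcompPx : ∀ (y : Fin D → ℝ) (μ ν ρ : Fin D),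
      GamP G B μ ν ρ y + GamP G B μ ρ ν y = pd μ (fun t => G t ν ρ) y := by
    intro y μ ν ρ
    simp only [GamP, Gam, Htor]
    linear_combination (1/2 : ℝ) * pdGsym y μ ρ ν + (1/2 : ℝ) * pdBanti y μ ν ρ
      + (1/2 : ℝ) * pdBanti y ν ρ μ + (1/2 : ℝ) * pdBanti y ρ μ ν
  have hcompMx : ∀ (y : Fin D → ℝ) (μ ν ρ : Fin D),
      GamM G B μ ν ρ y + GamM G B μ ρ ν y = pd μ (fun t => G t ν ρ) y := by
    intro y μ ν ρ
    simp only [GamM, Gam, Htor]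
    linear_combination (1/2 : ℝ) * pdGsym y μ ρ ν - (1/2 : ℝ) * pdBanti y μ ν ρ
      - (1/2 : ℝ) * pdBanti y ν ρ μ - (1/2 : ℝ) * pdBanti y ρ μ ν
  -- expansion of the first derivative of GamM
  have pdGamM : ∀ (x : Fin D → ℝ) (σ α β γ : Fin D),
      pd σ (fun y => GamM G B α β γ y) x
        = (pd σ (pd α (fun t => G t β γ)) x + pd σ (pd β (fun t => G t α γ)) x
            - pd σ (pd γ (fun t => G t α β)) x) / 2
          - (pd σ (pd α (fun t => B t β γ)) x + pd σ (pd β (fun t => B t γ α)) x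
            + pd σ (pd γ (fun t => B t α β)) x) / 2 := by
    intro x σ α β γ
    have d1 : DifferentiableAt ℝ (pd α (fun t => G t β γ)) x := ((hGs β γ).pd α).diffAt
    have d2 : DifferentiableAt ℝ (pd β (fun t => G t α γ)) x := ((hGs α γ).pd β).diffAt
    have d3 : DifferentiableAt ℝ (pd γ (fun t => G t α β)) x := ((hGs α β).pd γ).diffAt
    have e1 : DifferentiableAt ℝ (pd α (fun t => B t β γ)) x := ((hBs β γ).pd α).diffAt
    have e2 : DifferentiableAt ℝ (pd β (fun t => B t γ α)) x := ((hBs γ α).pd β).diffAt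
    have e3 : DifferentiableAt ℝ (pd γ (fun t => B t α β)) x := ((hBs α β).pd γ).diffAt
    have hfun : (fun y => GamM G B α β γ y) = fun y =>
        (pd α (fun t => G t β γ) y + pd β (fun t => G t α γ) y
          - pd γ (fun t => G t α β) y) / 2
        - (pd α (fun t => B t β γ) y + pd β (fun t => B t γ α) y
          + pd γ (fun t => B t α β) y) / 2 := rfl
    have dG3 : DifferentiableAt ℝ (fun y => pd α (fun t => G t β γ) y
        + pd β (fun t => G t α γ) y - pd γ (fun t => G t α β) y) x := (d1.add d2).sub d3
    have dB3 : DifferentiableAt ℝ (fun y => pd α (fun t => B t β γ) y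
        + pd β (fun t => B t γ α) y + pd γ (fun t => B t α β) y) x := (e1.add e2).add e3
    have dG3' : DifferentiableAt ℝ (fun y => (pd α (fun t => G t β γ) y
        + pd β (fun t => G t α γ) y - pd γ (fun t => G t α β) y) / 2) x :=
      Sm.diffAt (((((hGs β γ).pd α).add ((hGs α γ).pd β)).sub ((hGs α β).pd γ)).div_const (2:ℝ))
    have dB3' : DifferentiableAt ℝ (fun y => (pd α (fun t => B t β γ) y
        + pd β (fun t => B t γ α) y + pd γ (fun t => B t α β) y) / 2) x :=
      Sm.diffAt (((((hBs β γ).pd α).add ((hBs γ α).pd β)).add ((hBs α β).pd γ)).div_const (2:ℝ))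
    rw [hfun, pd_sub dG3' dB3', pd_div_const dG3, pd_div_const dB3,
      pd_sub (d1.fun_add d2) d3, pd_add d1 d2, pd_add (e1.fun_add e2) e3, pd_add e1 e2]
  -- the four-term second-derivative identity for GamM
  have hdM4x : ∀ (x : Fin D → ℝ) (ν τ ρ μ : Fin D),
      pd ν (fun y => GamM G B τ ρ μ y) x - pd τ (fun y => GamM G B ν ρ μ y) x
        + pd ρ (fun y => GamM G B τ μ ν y) x - pd μ (fun y => GamM G B τ ρ ν y) x = 0 := by
    intro x ν τ ρ μ
    have hCG : ∀ (s t a b : Fin D), pd s (pd t (fun y => G y a b)) x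
        = pd t (pd s (fun y => G y a b)) x := fun s t a b => pd_comm (hGs a b) s t x
    have hSG : ∀ (s t a b : Fin D), pd s (pd t (fun y => G y a b)) x
        = pd s (pd t (fun y => G y b a)) x := fun s t a b =>
      pd_congr (fun y => pd_congr (fun u => hGsym u a b) t y) s x
    have hCB2 : ∀ (s t a b : Fin D), pd s (pd t (fun y => B y a b)) x
        = pd t (pd s (fun y => B y a b)) x := fun s t a b => pd_comm (hBs a b) s t x
    have hAB : ∀ (s t a b : Fin D), pd s (pd t (fun y => B y a b)) x
        = -pd s (pd t (fun y => B y b a)) x := by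
      intro s t a b
      rw [pd_congr (fun y => pdBanti y t a b) s x, pd_neg]
    rw [pdGamM x ν τ ρ μ, pdGamM x τ ν ρ μ, pdGamM x ρ τ μ ν, pdGamM x μ τ ρ ν]
    linear_combination
      (-1/2 : ℝ) * hAB ν ρ μ τ
      - (1/2 : ℝ) * hCG τ ν ρ μ
      + (1/2 : ℝ) * hCB2 τ ν ρ μ
      + (1/2 : ℝ) * hCG ρ τ μ ν
      + (1/2 : ℝ) * hSG τ ρ μ ν
      - (1/2 : ℝ) * hCG ρ ν τ μ
      - (1/2 : ℝ) * hCB2 ρ τ μ ν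
      - (1/2 : ℝ) * hCB2 ρ ν τ μ
      - (1/2 : ℝ) * hCG μ τ ρ ν
      - (1/2 : ℝ) * hSG τ μ ρ ν
      - (1/2 : ℝ) * hCG μ ρ τ ν
      + (1/2 : ℝ) * hCG μ ν τ ρ
      + (1/2 : ℝ) * hCB2 μ τ ρ ν
      + (1/2 : ℝ) * hAB τ μ ρ ν
      + (1/2 : ℝ) * hCB2 μ ρ ν τ
      + (1/2 : ℝ) * hCB2 μ ν τ ρ
  -- zeroth-order constraints
  have hCAx : ∀ (x : Fin D → ℝ) (μ ν : Fin D),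
      (∑ ρ, (G x ν ρ * pd μ (fun y => ζ y ρ) x + GamP G B μ ρ ν x * ζ x ρ)) = 0 := by
    intro x μ ν
    have h := h1 μ ν x
    simp only [Dp] at h
    rw [Finset.sum_add_distrib]
    exact h
  have hCBx : ∀ (x : Fin D → ℝ) (μ ν : Fin D),
      (∑ ρ, (G x ν ρ * pd μ (fun y => ξ y ρ) x + GamM G B μ ρ ν x * ξ x ρ)) = 0 := by
    intro x μ ν
    have h := h2 μ ν x
    simp only [Dm] at h
    rw [Finset.sum_add_distrib]
    exact h
  -- differentiated constraints
  have hDAx : ∀ (x : Fin D → ℝ) (σ τ μ : Fin D),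
      (∑ ρ, (pd σ (fun y => G y μ ρ) x * pd τ (fun y => ζ y ρ) x
        + G x μ ρ * pd σ (pd τ (fun y => ζ y ρ)) x
        + pd σ (fun y => GamP G B τ ρ μ y) x * ζ x ρ
        + GamP G B τ ρ μ x * pd σ (fun y => ζ y ρ) x)) = 0 := by
    intro x σ τ μ
    have hzero : pd σ (fun y => Dp G B ζ τ μ y) x = 0 :=
      pd_of_eq_zero (fun y => h1 τ μ y) σ x
    have hrw : pd σ (fun y => Dp G B ζ τ μ y) x
        = pd σ (fun y => (∑ ρ, (fun (ρ : Fin D) (y : Fin D → ℝ) => G y μ ρ * pd τ (fun u => ζ u ρ) y) ρ y)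
            + (∑ ρ, (fun (ρ : Fin D) (y : Fin D → ℝ) => GamP G B τ ρ μ y * ζ y ρ) ρ y)) x := rfl
    have dA : ∀ ρ : Fin D, DifferentiableAt ℝ (fun y => G y μ ρ * pd τ (fun u => ζ u ρ) y) x :=
      fun ρ => (hGs μ ρ).diffAt.mul ((hζ ρ).pd τ).diffAt
    have dB : ∀ ρ : Fin D, DifferentiableAt ℝ (fun y => GamP G B τ ρ μ y * ζ y ρ) x :=
      fun ρ => (hSmGamP τ ρ μ).diffAt.mul (hζ ρ).diffAt
    rw [hrw, pd_add (DifferentiableAt.fun_sum (fun ρ _ => dA ρ)) (DifferentiableAt.fun_sum (fun ρ _ => dB ρ)),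
      pd_sum Finset.univ (fun ρ _ => dA ρ), pd_sum Finset.univ (fun ρ _ => dB ρ)] at hzero
    calc (∑ ρ, (pd σ (fun y => G y μ ρ) x * pd τ (fun y => ζ y ρ) x
            + G x μ ρ * pd σ (pd τ (fun y => ζ y ρ)) x
            + pd σ (fun y => GamP G B τ ρ μ y) x * ζ x ρ
            + GamP G B τ ρ μ x * pd σ (fun y => ζ y ρ) x))
        = (∑ ρ, pd σ (fun y => G y μ ρ * pd τ (fun u => ζ u ρ) y) x)
          + ∑ ρ, pd σ (fun y => GamP G B τ ρ μ y * ζ y ρ) x := by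
          rw [← Finset.sum_add_distrib]
          refine Finset.sum_congr rfl (fun ρ _ => ?_)
          rw [pd_mul (hGs μ ρ).diffAt ((hζ ρ).pd τ).diffAt,
            pd_mul (hSmGamP τ ρ μ).diffAt (hζ ρ).diffAt]
          ring
      _ = 0 := hzero
  have hDBx : ∀ (x : Fin D → ℝ) (σ τ μ : Fin D),
      (∑ ρ, (pd σ (fun y => G y μ ρ) x * pd τ (fun y => ξ y ρ) x
        + G x μ ρ * pd σ (pd τ (fun y => ξ y ρ)) x
        + pd σ (fun y => GamM G B τ ρ μ y) x * ξ x ρ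
        + GamM G B τ ρ μ x * pd σ (fun y => ξ y ρ) x)) = 0 := by
    intro x σ τ μ
    have hzero : pd σ (fun y => Dm G B ξ τ μ y) x = 0 :=
      pd_of_eq_zero (fun y => h2 τ μ y) σ x
    have hrw : pd σ (fun y => Dm G B ξ τ μ y) x
        = pd σ (fun y => (∑ ρ, (fun (ρ : Fin D) (y : Fin D → ℝ) => G y μ ρ * pd τ (fun u => ξ u ρ) y) ρ y)
            + (∑ ρ, (fun (ρ : Fin D) (y : Fin D → ℝ) => GamM G B τ ρ μ y * ξ y ρ) ρ y)) x := rfl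
    have dA : ∀ ρ : Fin D, DifferentiableAt ℝ (fun y => G y μ ρ * pd τ (fun u => ξ u ρ) y) x :=
      fun ρ => (hGs μ ρ).diffAt.mul ((hξ ρ).pd τ).diffAt
    have dB : ∀ ρ : Fin D, DifferentiableAt ℝ (fun y => GamM G B τ ρ μ y * ξ y ρ) x :=
      fun ρ => (hSmGamM τ ρ μ).diffAt.mul (hξ ρ).diffAt
    rw [hrw, pd_add (DifferentiableAt.fun_sum (fun ρ _ => dA ρ)) (DifferentiableAt.fun_sum (fun ρ _ => dB ρ)),
      pd_sum Finset.univ (fun ρ _ => dA ρ), pd_sum Finset.univ (fun ρ _ => dB ρ)] at hzero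
    calc (∑ ρ, (pd σ (fun y => G y μ ρ) x * pd τ (fun y => ξ y ρ) x
            + G x μ ρ * pd σ (pd τ (fun y => ξ y ρ)) x
            + pd σ (fun y => GamM G B τ ρ μ y) x * ξ x ρ
            + GamM G B τ ρ μ x * pd σ (fun y => ξ y ρ) x))
        = (∑ ρ, pd σ (fun y => G y μ ρ * pd τ (fun u => ξ u ρ) y) x)
          + ∑ ρ, pd σ (fun y => GamM G B τ ρ μ y * ξ y ρ) x := by
          rw [← Finset.sum_add_distrib]
          refine Finset.sum_congr rfl (fun ρ _ => ?_)
          rw [pd_mul (hGs μ ρ).diffAt ((hξ ρ).pd τ).diffAt,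
            pd_mul (hSmGamM τ ρ μ).diffAt (hξ ρ).diffAt]
          ring
      _ = 0 := hzero
  -- the key contraction identities
  have key : ∀ (μ ν : Fin D) (x : Fin D → ℝ),
      (∑ ρ, GamP G B μ ν ρ x *
        (∑ τ, (ζ x τ * pd τ (fun y => ξ y ρ) x - ξ x τ * pd τ (fun y => ζ y ρ) x))) = 0 := by
    intro μ ν x
    exact chiralAlg (fun p q => G x p q) (fun s p q => pd s (fun y => G y p q) x)
      (fun p q r => GamP G B p q r x) (fun p q r => GamM G B p q r x)
      (fun s p q r => pd s (fun y => GamP G B p q r y) x)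
      (fun s p q r => pd s (fun y => GamM G B p q r y) x)
      (ζ x) (ξ x)
      (fun s r => pd s (fun y => ζ y r) x) (fun s r => pd s (fun y => ξ y r) x)
      (fun s t r => pd s (pd t (fun y => ζ y r)) x)
      (fun s t r => pd s (pd t (fun y => ξ y r)) x)
      (fun p q => hGsym x p q)
      (fun p q r => hPMx x p q r)
      (fun s p q r => pd_congr (fun y => hPMx y p q r) s x)
      (fun p q r => hcompPx x p q r)
      (fun p q r => hcompMx x p q r)
      (fun s t r => pd_comm (hζ r) s t x)
      (fun s t r => pd_comm (hξ r) s t x)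
      (fun n t r m => hdM4x x n t r m)
      (fun p q => hCAx x p q)
      (fun p q => hCBx x p q)
      (fun s p q => hDAx x s p q)
      (fun s p q => hDBx x s p q)
      μ ν
  have key0 : ∀ (μ : Fin D) (x : Fin D → ℝ),
      (∑ ρ, G x μ ρ *
        (∑ τ, (ζ x τ * pd τ (fun y => ξ y ρ) x - ξ x τ * pd τ (fun y => ζ y ρ) x))) = 0 := by
    intro μ x
    exact chiralAlg0 (fun p q => G x p q)
      (fun p q r => GamP G B p q r x) (fun p q r => GamM G B p q r x)
      (ζ x) (ξ x)
      (fun s r => pd s (fun y => ζ y r) x) (fun s r => pd s (fun y => ξ y r) x)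
      (fun p q r => hPMx x p q r)
      (fun p q => hCAx x p q)
      (fun p q => hCBx x p q)
      μ
  -- assemble for the nondegeneracy hypothesis
  have hveq : ∀ (x : Fin D → ℝ) (ρ : Fin D),
      ((∑ τ, ζ x τ * pd τ (fun y => ξ y ρ) x) - ∑ τ, ξ x τ * pd τ (fun y => ζ y ρ) x)
        = ∑ τ, (ζ x τ * pd τ (fun y => ξ y ρ) x - ξ x τ * pd τ (fun y => ζ y ρ) x) := by
    intro x ρ
    rw [Finset.sum_sub_distrib]
  have hsmooth : SmoothVF (fun x μ =>
      (∑ ν, ζ x ν * pd ν (fun y => ξ y μ) x) - ∑ ν, ξ x ν * pd ν (fun y => ζ y μ) x) := by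
    intro μ
    have hs1 : Sm (fun x => ∑ ν, ζ x ν * pd ν (fun y => ξ y μ) x) :=
      ContDiff.sum (fun ν _ => (hζ ν).mul ((hξ μ).pd ν))
    have hs2 : Sm (fun x => ∑ ν, ξ x ν * pd ν (fun y => ζ y μ) x) :=
      ContDiff.sum (fun ν _ => (hξ ν).mul ((hζ μ).pd ν))
    exact hs1.sub hs2
  have cond1 : ∀ (μ : Fin D) (x : Fin D → ℝ),
      (∑ ν, G x μ ν * ((∑ τ, ζ x τ * pd τ (fun y => ξ y ν) x)
        - ∑ τ, ξ x τ * pd τ (fun y => ζ y ν) x)) = 0 := by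
    intro μ x
    calc (∑ ν, G x μ ν * ((∑ τ, ζ x τ * pd τ (fun y => ξ y ν) x)
          - ∑ τ, ξ x τ * pd τ (fun y => ζ y ν) x))
        = ∑ ν, G x μ ν * (∑ τ, (ζ x τ * pd τ (fun y => ξ y ν) x
            - ξ x τ * pd τ (fun y => ζ y ν) x)) :=
          Finset.sum_congr rfl (fun ν _ => by rw [hveq x ν])
      _ = 0 := key0 μ x
  have cond2 : ∀ (μ ν : Fin D) (x : Fin D → ℝ),
      (∑ ρ, Gam G μ ν ρ x * ((∑ τ, ζ x τ * pd τ (fun y => ξ y ρ) x)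
        - ∑ τ, ξ x τ * pd τ (fun y => ζ y ρ) x)) = 0 := by
    intro μ ν x
    have hGsplit : ∀ ρ, Gam G μ ν ρ x = (GamP G B μ ν ρ x + GamP G B ν μ ρ x) / 2 := by
      intro ρ
      have h := hPMx x ν μ ρ
      simp only [GamP, GamM] at h ⊢
      linear_combination (-1/2 : ℝ) * h
    calc (∑ ρ, Gam G μ ν ρ x * ((∑ τ, ζ x τ * pd τ (fun y => ξ y ρ) x)
          - ∑ τ, ξ x τ * pd τ (fun y => ζ y ρ) x))
        = ∑ ρ, ((GamP G B μ ν ρ x * (∑ τ, (ζ x τ * pd τ (fun y => ξ y ρ) x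
              - ξ x τ * pd τ (fun y => ζ y ρ) x))) / 2
            + (GamP G B ν μ ρ x * (∑ τ, (ζ x τ * pd τ (fun y => ξ y ρ) x
              - ξ x τ * pd τ (fun y => ζ y ρ) x))) / 2) := by
          refine Finset.sum_congr rfl (fun ρ _ => ?_)
          rw [hveq x ρ, hGsplit ρ]; ring
      _ = (∑ ρ, (GamP G B μ ν ρ x * (∑ τ, (ζ x τ * pd τ (fun y => ξ y ρ) x
              - ξ x τ * pd τ (fun y => ζ y ρ) x))) / 2)
          + ∑ ρ, (GamP G B ν μ ρ x * (∑ τ, (ζ x τ * pd τ (fun y => ξ y ρ) x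
              - ξ x τ * pd τ (fun y => ζ y ρ) x))) / 2 := Finset.sum_add_distrib
      _ = 0 := by
          rw [← Finset.sum_div, ← Finset.sum_div, key μ ν x, key ν μ x]
          norm_num
  have cond3 : ∀ (μ ν : Fin D) (x : Fin D → ℝ),
      (∑ ρ, Htor B μ ν ρ x * ((∑ τ, ζ x τ * pd τ (fun y => ξ y ρ) x)
        - ∑ τ, ξ x τ * pd τ (fun y => ζ y ρ) x)) = 0 := by
    intro μ ν x
    have hHsplit : ∀ ρ, Htor B μ ν ρ x = GamP G B μ ν ρ x - GamP G B ν μ ρ x := by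
      intro ρ
      have h := hPMx x ν μ ρ
      simp only [GamP, GamM] at h ⊢
      linear_combination h
    calc (∑ ρ, Htor B μ ν ρ x * ((∑ τ, ζ x τ * pd τ (fun y => ξ y ρ) x)
          - ∑ τ, ξ x τ * pd τ (fun y => ζ y ρ) x))
        = ∑ ρ, ((GamP G B μ ν ρ x * (∑ τ, (ζ x τ * pd τ (fun y => ξ y ρ) x
              - ξ x τ * pd τ (fun y => ζ y ρ) x)))
            - (GamP G B ν μ ρ x * (∑ τ, (ζ x τ * pd τ (fun y => ξ y ρ) x
              - ξ x τ * pd τ (fun y => ζ y ρ) x)))) := by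
          refine Finset.sum_congr rfl (fun ρ _ => ?_)
          rw [hveq x ρ, hHsplit ρ]; ring
      _ = (∑ ρ, GamP G B μ ν ρ x * (∑ τ, (ζ x τ * pd τ (fun y => ξ y ρ) x
              - ξ x τ * pd τ (fun y => ζ y ρ) x)))
          - ∑ ρ, GamP G B ν μ ρ x * (∑ τ, (ζ x τ * pd τ (fun y => ξ y ρ) x
              - ξ x τ * pd τ (fun y => ζ y ρ) x)) := by rw [Finset.sum_sub_distrib]
      _ = 0 := by rw [key μ ν x, key ν μ x]; norm_num
  exact hnd (fun x μ =>
      (∑ ν, ζ x ν * pd ν (fun y => ξ y μ) x) - ∑ ν, ξ x ν * pd ν (fun y => ζ y μ) x)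
    hsmooth cond1 cond2 cond3
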